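/- If there exist propelinear perfect binary codes of lengths t and m, each containing the all-zero vector, with ranks r_t and r_m respectively, then there exists a propelinear perfect binary code of length tm + t + m containing the all-zero vector with rank tm + r_t + r_m (obtained as the Mollard code with the zero function f ≡ 0). -/

import Mathlib

open Finset

/-- The binary vector space `F^n`. -/
abbrev F (n : ℕ) : Type := Fin n → ZMod 2

/-- Action of a coordinate permutation: `(π x) i = x (π⁻¹ i)`. -/
def permAct {n : ℕ} (π : Equiv.Perm (Fin n)) (x : F n) : F n := fun i => x (π⁻¹ i)

/-- `(v, π)` is an isometry fixing the code `C` set-wise. -/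
def IsIsoPair {n : ℕ} (C : Set (F n)) (v : F n) (π : Equiv.Perm (Fin n)) : Prop :=
  (fun x => v + permAct π x) '' C = C

/-- `C` is a single-error-correcting perfect binary code. -/
def IsPerfectCode {n : ℕ} (C : Set (F n)) : Prop :=
  ∀ x : F n, ∃! y : F n, y ∈ C ∧ hammingDist x y ≤ 1

/-- `P` is a propelinear structure on the code `C`. -/
def IsPropStructure {n : ℕ} (C : Set (F n)) (P : F n → Equiv.Perm (Fin n)) : Prop :=
  (∀ x ∈ C, IsIsoPair C x (P x)) ∧
  (∀ x ∈ C, ∀ y ∈ C, P (x + permAct (P x) y) = P x * P y)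

/-- `C` admits a propelinear structure. -/
def IsPropelinear {n : ℕ} (C : Set (F n)) : Prop :=
  ∃ P : F n → Equiv.Perm (Fin n), IsPropStructure C P

/-- The rank of a code: dimension of its linear span over GF(2). -/
noncomputable def codeRank {n : ℕ} (C : Set (F n)) : ℕ :=
  Module.finrank (ZMod 2) (Submodule.span (ZMod 2) C)

/-- The kernel of a code `C`: codewords whose translate fixes `C`. -/
def codeKernel {n : ℕ} (C : Set (F n)) : Set (F n) :=
  {x ∈ C | (fun c => x + c) '' C = C}

/-- A propelinear structure is normalized if codewords in the same coset
of the kernel get the same permutation. -/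
def IsNormalized {n : ℕ} (C : Set (F n)) (P : F n → Equiv.Perm (Fin n)) : Prop :=
  ∀ x ∈ C, ∀ y ∈ C, x + y ∈ codeKernel C → P x = P y

/-- A code is transitive if its automorphism group acts transitively on it. -/
def IsTransitive {n : ℕ} (C : Set (F n)) : Prop :=
  ∀ x ∈ C, ∀ y ∈ C, ∃ v π, IsIsoPair C v π ∧ v + permAct π x = y

/-- The (ZMod 2) weight parity `|x| = Σ_i x_i`. -/
def wt {n : ℕ} (x : F n) : ZMod 2 := ∑ i, x i

/-- Assemble a vector of `F^(2n+1)` from a first block of `n` coordinates,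
a middle coordinate and a last block of `n` coordinates. -/
def vasVec {n : ℕ} (a : F n) (b : ZMod 2) (c : F n) : F (2 * n + 1) :=
  fun i =>
    if h : (i : ℕ) < n then a ⟨i, h⟩
    else if h' : (i : ℕ) = n then b
    else c ⟨(i : ℕ) - (n + 1), by have := i.isLt; omega⟩

/-- The Vasil'ev code of `C` with function `lam`. -/
def vasCode {n : ℕ} (C : Set (F n)) (lam : F n → ZMod 2) : Set (F (2 * n + 1)) :=
  {w | ∃ x : F n, ∃ y ∈ C, w = vasVec (x + y) (wt x + lam y) x}

/-- Assemble a vector of `F^(tm+t+m)` from blocks of `tm`, `t` and `m` coordinates. -/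
def mollVec {t m : ℕ} (x : F (t * m)) (b : F t) (c : F m) : F (t * m + t + m) :=
  fun i =>
    if h : (i : ℕ) < t * m then x ⟨i, h⟩
    else if h' : (i : ℕ) < t * m + t then b ⟨(i : ℕ) - t * m, by omega⟩
    else c ⟨(i : ℕ) - (t * m + t), by have := i.isLt; omega⟩

/-- First generalized parity-check function: `p1(x)_i = Σ_j x_{ij}`. -/
def p1 {t m : ℕ} (x : F (t * m)) : F t := fun i => ∑ j : Fin m, x (finProdFinEquiv (i, j))

/-- Second generalized parity-check function: `p2(x)_j = Σ_i x_{ij}`. -/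
def p2 {t m : ℕ} (x : F (t * m)) : F m := fun j => ∑ i : Fin t, x (finProdFinEquiv (i, j))

/-- The Mollard code of `Ct` and `Cm` with function `f`. -/
def mollCode {t m : ℕ} (Ct : Set (F t)) (Cm : Set (F m)) (f : F t → F m) :
    Set (F (t * m + t + m)) :=
  {w | ∃ x : F (t * m), ∃ y ∈ Ct, ∃ z ∈ Cm, w = mollVec x (y + p1 x) (z + p2 x + f y)}

/-! ### Auxiliary material for the Mollard construction -/

namespace MollardAux

variable {n t m : ℕ}

lemma zmod2_add_self (a : ZMod 2) : a + a = 0 := by revert a; decide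

lemma two_torsion (v : F n) : v + v = 0 := by
  funext i; exact zmod2_add_self (v i)

lemma add_cancel_left (v w : F n) : v + (v + w) = w := by
  rw [← add_assoc, two_torsion, zero_add]

lemma add_add_cancel (v w : F n) : v + w + w = v := by
  rw [add_assoc, two_torsion, add_zero]

/-! #### permAct lemmas -/

lemma permAct_add (π : Equiv.Perm (Fin n)) (x y : F n) :
    permAct π (x + y) = permAct π x + permAct π y := rfl

lemma permAct_mul (π σ : Equiv.Perm (Fin n)) (x : F n) :
    permAct (π * σ) x = permAct π (permAct σ x) := by
  funext i; simp [permAct, mul_inv_rev]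

lemma permAct_one (x : F n) : permAct (1 : Equiv.Perm (Fin n)) x = x := rfl

lemma permAct_inv_act (π : Equiv.Perm (Fin n)) (x : F n) :
    permAct π⁻¹ (permAct π x) = x := by
  rw [← permAct_mul, inv_mul_cancel, permAct_one]

lemma permAct_act_inv (π : Equiv.Perm (Fin n)) (x : F n) :
    permAct π (permAct π⁻¹ x) = x := by
  rw [← permAct_mul, mul_inv_cancel, permAct_one]

/-! #### Hamming distance lemmas -/

lemma hammingDist_add_left (s x y : F n) :
    hammingDist (s + x) (s + y) = hammingDist x y :=
  hammingDist_comp (fun i a => s i + a) (fun i => add_right_injective (s i))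

lemma hammingDist_single (x : F n) (k : Fin n) :
    hammingDist x (x + (Pi.single k 1 : F n)) = 1 := by
  have h : ({i | x i ≠ (x + (Pi.single k 1 : F n)) i} : Finset (Fin n)) = {k} := by
    ext i
    by_cases hik : i = k
    · subst hik
      simp [Pi.single_apply]
    · simp [Pi.single_apply, hik]
  rw [hammingDist, h, Finset.card_singleton]

lemma zmod2_ne_iff {a b : ZMod 2} : a ≠ b ↔ b = a + 1 := by revert a b; decide

lemma hammingDist_le_one {x y : F n} (h : hammingDist x y ≤ 1) :
    y = x ∨ ∃ k, y = x + (Pi.single k 1 : F n) := by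
  rcases Nat.le_one_iff_eq_zero_or_eq_one.mp h with h0 | h1
  · exact Or.inl (hammingDist_eq_zero.mp h0).symm
  · right
    rw [hammingDist, Finset.card_eq_one] at h1
    obtain ⟨k, hk⟩ := h1
    refine ⟨k, funext fun i => ?_⟩
    by_cases hik : i = k
    · subst hik
      have : x i ≠ y i := by
        have : i ∈ ({j | x j ≠ y j} : Finset (Fin n)) := by rw [hk]; exact Finset.mem_singleton_self i
        simpa using this
      have := zmod2_ne_iff.mp this
      simp [this, Pi.single_apply]
    · have : ¬ (x i ≠ y i) := by
        intro hne
        have : i ∈ ({j | x j ≠ y j} : Finset (Fin n)) := by simpa using hne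
        rw [hk] at this
        exact hik (Finset.mem_singleton.mp this)
      push_neg at this
      simp [← this, Pi.single_apply, hik]

/-! #### Block structure of `F (t*m+t+m)` -/

/-- The equivalence identifying the three blocks. -/
def blockEquiv (t m : ℕ) : (Fin (t * m) ⊕ Fin t) ⊕ Fin m ≃ Fin (t * m + t + m) :=
  (Equiv.sumCongr finSumFinEquiv (Equiv.refl (Fin m))).trans finSumFinEquiv

lemma mollVec_blockEquiv (x : F (t * m)) (b : F t) (c : F m)
    (k : (Fin (t * m) ⊕ Fin t) ⊕ Fin m) :
    mollVec x b c (blockEquiv t m k) = Sum.elim (Sum.elim x b) c k := by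
  rcases k with (i | i) | i
  · have h1 : (blockEquiv t m (Sum.inl (Sum.inl i)) : ℕ) = (i : ℕ) := by
      simp [blockEquiv]
    have h2 : ((blockEquiv t m (Sum.inl (Sum.inl i))) : ℕ) < t * m := by rw [h1]; exact i.isLt
    simp only [mollVec, dif_pos h2, Sum.elim_inl]
    exact congrArg x (Fin.ext h1)
  · have h1 : (blockEquiv t m (Sum.inl (Sum.inr i)) : ℕ) = t * m + (i : ℕ) := by
      simp [blockEquiv]
    have h2 : ¬ ((blockEquiv t m (Sum.inl (Sum.inr i))) : ℕ) < t * m := by rw [h1]; omega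
    have h3 : ((blockEquiv t m (Sum.inl (Sum.inr i))) : ℕ) < t * m + t := by
      rw [h1]; have := i.isLt; omega
    simp only [mollVec, dif_neg h2, dif_pos h3, Sum.elim_inl, Sum.elim_inr]
    congr 1
    refine Fin.ext ?_
    simp [h1]
  · have h1 : (blockEquiv t m (Sum.inr i) : ℕ) = t * m + t + (i : ℕ) := by
      simp [blockEquiv]
    have h2 : ¬ ((blockEquiv t m (Sum.inr i)) : ℕ) < t * m := by rw [h1]; omega
    have h3 : ¬ ((blockEquiv t m (Sum.inr i)) : ℕ) < t * m + t := by rw [h1]; omega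
    simp only [mollVec, dif_neg h2, dif_neg h3, Sum.elim_inr]
    congr 1
    refine Fin.ext ?_
    simp [h1]

/-- First block of a vector. -/
def q0 (w : F (t * m + t + m)) : F (t * m) := fun i => w (blockEquiv t m (Sum.inl (Sum.inl i)))

/-- Second block of a vector. -/
def q1 (w : F (t * m + t + m)) : F t := fun i => w (blockEquiv t m (Sum.inl (Sum.inr i)))

/-- Third block of a vector. -/
def q2 (w : F (t * m + t + m)) : F m := fun i => w (blockEquiv t m (Sum.inr i))

@[simp] lemma q0_mollVec (x : F (t * m)) (b : F t) (c : F m) : q0 (mollVec x b c) = x := by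
  funext i; exact mollVec_blockEquiv x b c (Sum.inl (Sum.inl i))

@[simp] lemma q1_mollVec (x : F (t * m)) (b : F t) (c : F m) : q1 (mollVec x b c) = b := by
  funext i; exact mollVec_blockEquiv x b c (Sum.inl (Sum.inr i))

@[simp] lemma q2_mollVec (x : F (t * m)) (b : F t) (c : F m) : q2 (mollVec x b c) = c := by
  funext i; exact mollVec_blockEquiv x b c (Sum.inr i)

lemma mollVec_q (w : F (t * m + t + m)) : mollVec (q0 w) (q1 w) (q2 w) = w := by
  funext i
  obtain ⟨k, rfl⟩ := (blockEquiv t m).surjective i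
  rw [mollVec_blockEquiv]
  rcases k with (i | i) | i <;> rfl

lemma mollVec_add (x x' : F (t * m)) (b b' : F t) (c c' : F m) :
    mollVec x b c + mollVec x' b' c' = mollVec (x + x') (b + b') (c + c') := by
  funext i
  obtain ⟨k, rfl⟩ := (blockEquiv t m).surjective i
  have := mollVec_blockEquiv x b c k
  have := mollVec_blockEquiv x' b' c' k
  have := mollVec_blockEquiv (x + x') (b + b') (c + c') k
  rcases k with (i | i) | i <;> simp_all

lemma mollVec_zero : (mollVec 0 0 0 : F (t * m + t + m)) = 0 := by
  funext i
  obtain ⟨k, rfl⟩ := (blockEquiv t m).surjective i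
  have := mollVec_blockEquiv (0 : F (t * m)) (0 : F t) (0 : F m) k
  rcases k with (i | i) | i <;> simp_all

lemma hammingDist_sum_card {x x' : F (t * m)} {b b' : F t} {c c' : F m} :
    hammingDist (mollVec x b c) (mollVec x' b' c') =
      hammingDist x x' + hammingDist b b' + hammingDist c c' := by
  classical
  have key : ∀ {N : ℕ} (u v : F N), hammingDist u v = ∑ i, if u i ≠ v i then 1 else 0 := by
    intro N u v
    rw [hammingDist, Finset.card_filter]
  rw [key, key, key, key]
  rw [← Fintype.sum_equiv (blockEquiv t m)
    (fun k => if mollVec x b c (blockEquiv t m k) ≠ mollVec x' b' c' (blockEquiv t m k) then 1 else 0)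
    (fun i => if mollVec x b c i ≠ mollVec x' b' c' i then 1 else 0) (fun k => rfl)]
  simp only [mollVec_blockEquiv]
  rw [Fintype.sum_sum_type, Fintype.sum_sum_type]
  simp only [add_assoc, ite_not]
  congr! <;> split_ifs <;> simp_all

/-! #### `p1`, `p2` lemmas -/

lemma p1_add (x y : F (t * m)) : p1 (x + y) = p1 x + p1 y := by
  funext i; simp [p1, Finset.sum_add_distrib]

lemma p2_add (x y : F (t * m)) : p2 (x + y) = p2 x + p2 y := by
  funext j; simp [p2, Finset.sum_add_distrib]

@[simp] lemma p1_zero : p1 (0 : F (t * m)) = 0 := by funext i; simp [p1]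

@[simp] lemma p2_zero : p2 (0 : F (t * m)) = 0 := by funext j; simp [p2]

lemma p1_single (i : Fin t) (j : Fin m) :
    p1 (Pi.single (finProdFinEquiv (i, j)) 1 : F (t * m)) = Pi.single i 1 := by
  funext i'
  simp only [p1, Pi.single_apply]
  by_cases hi : i' = i
  · subst hi
    rw [Finset.sum_eq_single j]
    · simp
    · intro j' _ hj'
      exact if_neg fun h => hj' (Prod.ext_iff.mp (finProdFinEquiv.injective h)).2
    · simp
  · rw [if_neg hi, Finset.sum_eq_zero]
    intro j' _
    exact if_neg fun h => hi (Prod.ext_iff.mp (finProdFinEquiv.injective h)).1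

lemma p2_single (i : Fin t) (j : Fin m) :
    p2 (Pi.single (finProdFinEquiv (i, j)) 1 : F (t * m)) = Pi.single j 1 := by
  funext j'
  simp only [p2, Pi.single_apply]
  by_cases hj : j' = j
  · subst hj
    rw [Finset.sum_eq_single i]
    · simp
    · intro i' _ hi'
      exact if_neg fun h => hi' (Prod.ext_iff.mp (finProdFinEquiv.injective h)).1
    · simp
  · rw [if_neg hj, Finset.sum_eq_zero]
    intro i' _
    exact if_neg fun h => hj (Prod.ext_iff.mp (finProdFinEquiv.injective h)).2

/-! #### The block permutations -/

/-- The permutation of the `t*m` block induced by `α` and `β`. -/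
def prodPerm (α : Equiv.Perm (Fin t)) (β : Equiv.Perm (Fin m)) : Equiv.Perm (Fin (t * m)) :=
  (finProdFinEquiv.symm.trans ((α.prodCongr β).trans finProdFinEquiv))

lemma prodPerm_apply (α : Equiv.Perm (Fin t)) (β : Equiv.Perm (Fin m)) (i : Fin t) (j : Fin m) :
    prodPerm α β (finProdFinEquiv (i, j)) = finProdFinEquiv (α i, β j) := by
  simp [prodPerm]

lemma prodPerm_mul (α α' : Equiv.Perm (Fin t)) (β β' : Equiv.Perm (Fin m)) :
    prodPerm (α * α') (β * β') = prodPerm α β * prodPerm α' β' := by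
  ext k
  obtain ⟨⟨i, j⟩, rfl⟩ := finProdFinEquiv.surjective k
  simp [Equiv.Perm.mul_apply, prodPerm_apply]

lemma prodPerm_one : prodPerm (1 : Equiv.Perm (Fin t)) (1 : Equiv.Perm (Fin m)) = 1 := by
  ext k
  obtain ⟨⟨i, j⟩, rfl⟩ := finProdFinEquiv.surjective k
  simp [prodPerm_apply]

lemma prodPerm_inv (α : Equiv.Perm (Fin t)) (β : Equiv.Perm (Fin m)) :
    (prodPerm α β)⁻¹ = prodPerm α⁻¹ β⁻¹ := by
  rw [inv_eq_iff_mul_eq_one, ← prodPerm_mul, mul_inv_cancel, mul_inv_cancel, prodPerm_one]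

lemma p1_permAct (α : Equiv.Perm (Fin t)) (β : Equiv.Perm (Fin m)) (x : F (t * m)) :
    p1 (permAct (prodPerm α β) x) = permAct α (p1 x) := by
  funext i
  have : ∀ j : Fin m, (prodPerm α β)⁻¹ (finProdFinEquiv (i, j)) =
      finProdFinEquiv (α⁻¹ i, β⁻¹ j) := by
    intro j; rw [prodPerm_inv, prodPerm_apply]
  simp only [p1, permAct, this]
  exact Fintype.sum_equiv β⁻¹ _ _ (fun j => rfl)

lemma p2_permAct (α : Equiv.Perm (Fin t)) (β : Equiv.Perm (Fin m)) (x : F (t * m)) :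
    p2 (permAct (prodPerm α β) x) = permAct β (p2 x) := by
  funext j
  have : ∀ i : Fin t, (prodPerm α β)⁻¹ (finProdFinEquiv (i, j)) =
      finProdFinEquiv (α⁻¹ i, β⁻¹ j) := by
    intro i; rw [prodPerm_inv, prodPerm_apply]
  simp only [p2, permAct, this]
  exact Fintype.sum_equiv α⁻¹ _ _ (fun i => rfl)

/-- The permutation of `F (t*m+t+m)` induced by `α` and `β`. -/
def bigPerm (α : Equiv.Perm (Fin t)) (β : Equiv.Perm (Fin m)) :
    Equiv.Perm (Fin (t * m + t + m)) :=
  (blockEquiv t m).permCongr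
    (Equiv.sumCongr (Equiv.sumCongr (prodPerm α β) α) β)

lemma bigPerm_apply (α : Equiv.Perm (Fin t)) (β : Equiv.Perm (Fin m))
    (k : (Fin (t * m) ⊕ Fin t) ⊕ Fin m) :
    bigPerm α β (blockEquiv t m k) =
      blockEquiv t m (Equiv.sumCongr (Equiv.sumCongr (prodPerm α β) α) β k) := by
  simp [bigPerm, Equiv.permCongr_apply]

lemma bigPerm_mul (α α' : Equiv.Perm (Fin t)) (β β' : Equiv.Perm (Fin m)) :
    bigPerm (α * α') (β * β') = bigPerm α β * bigPerm α' β' := by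
  ext i
  obtain ⟨k, rfl⟩ := (blockEquiv t m).surjective i
  rw [Equiv.Perm.mul_apply, bigPerm_apply, bigPerm_apply, bigPerm_apply]
  rcases k with (i | i) | i <;> simp [Equiv.Perm.mul_apply, prodPerm_mul]

lemma bigPerm_one : bigPerm (1 : Equiv.Perm (Fin t)) (1 : Equiv.Perm (Fin m)) = 1 := by
  ext i
  obtain ⟨k, rfl⟩ := (blockEquiv t m).surjective i
  rw [bigPerm_apply]
  rcases k with (i | i) | i <;> simp [prodPerm_one]

lemma bigPerm_inv (α : Equiv.Perm (Fin t)) (β : Equiv.Perm (Fin m)) :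
    (bigPerm α β)⁻¹ = bigPerm α⁻¹ β⁻¹ := by
  rw [inv_eq_iff_mul_eq_one, ← bigPerm_mul, mul_inv_cancel, mul_inv_cancel, bigPerm_one]

lemma permAct_bigPerm (α : Equiv.Perm (Fin t)) (β : Equiv.Perm (Fin m))
    (x : F (t * m)) (b : F t) (c : F m) :
    permAct (bigPerm α β) (mollVec x b c) =
      mollVec (permAct (prodPerm α β) x) (permAct α b) (permAct β c) := by
  funext i
  obtain ⟨k, rfl⟩ := (blockEquiv t m).surjective i
  have hinv : (bigPerm α β)⁻¹ (blockEquiv t m k) =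
      blockEquiv t m (Equiv.sumCongr (Equiv.sumCongr (prodPerm α⁻¹ β⁻¹) α⁻¹) β⁻¹ k) := by
    rw [bigPerm_inv, bigPerm_apply]
  show mollVec x b c ((bigPerm α β)⁻¹ (blockEquiv t m k)) = _
  rw [hinv, mollVec_blockEquiv, mollVec_blockEquiv]
  rcases k with (i | i) | i
  · show x _ = x ((prodPerm α β)⁻¹ i)
    rw [prodPerm_inv]
  · rfl
  · rfl

/-! #### Decoding and membership in the Mollard code -/

/-- Decoded `Ct`-component. -/
def decode1 (w : F (t * m + t + m)) : F t := q1 w + p1 (q0 w)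

/-- Decoded `Cm`-component. -/
def decode2 (w : F (t * m + t + m)) : F m := q2 w + p2 (q0 w)

@[simp] lemma decode1_mollVec (x : F (t * m)) (y : F t) (c : F m) :
    decode1 (mollVec x (y + p1 x) c) = y := by
  simp [decode1, add_add_cancel]

@[simp] lemma decode2_mollVec (x : F (t * m)) (b : F t) (z : F m) :
    decode2 (mollVec x b (z + p2 x)) = z := by
  simp [decode2, add_add_cancel]

lemma mem_moll {Ct : Set (F t)} {Cm : Set (F m)} {w : F (t * m + t + m)} :
    w ∈ mollCode Ct Cm (fun _ => 0) ↔
      decode1 w ∈ Ct ∧ decode2 w ∈ Cm ∧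
        w = mollVec (q0 w) (decode1 w + p1 (q0 w)) (decode2 w + p2 (q0 w)) := by
  constructor
  · rintro ⟨x, y, hy, z, hz, rfl⟩
    simp only [add_zero]
    have h1 : decode1 (mollVec x (y + p1 x) (z + p2 x)) = y := decode1_mollVec x y _
    have h2 : decode2 (mollVec x (y + p1 x) (z + p2 x)) = z := decode2_mollVec x _ z
    rw [h1, h2]
    exact ⟨hy, hz, by rw [q0_mollVec]⟩
  · rintro ⟨h1, h2, h3⟩
    exact ⟨q0 w, decode1 w, h1, decode2 w, h2, by rw [add_zero]; exact h3⟩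

lemma moll_intro {Ct : Set (F t)} {Cm : Set (F m)} {x : F (t * m)} {y : F t} {z : F m}
    (hy : y ∈ Ct) (hz : z ∈ Cm) :
    mollVec x (y + p1 x) (z + p2 x) ∈ mollCode Ct Cm (fun _ => 0) :=
  ⟨x, y, hy, z, hz, by rw [add_zero]⟩

lemma moll_decomp {Ct : Set (F t)} {Cm : Set (F m)} {w : F (t * m + t + m)}
    (hw : w ∈ mollCode Ct Cm (fun _ => 0)) :
    ∃ x : F (t * m), ∃ y ∈ Ct, ∃ z ∈ Cm, w = mollVec x (y + p1 x) (z + p2 x) := by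
  rcases mem_moll.mp hw with ⟨h1, h2, h3⟩
  exact ⟨q0 w, decode1 w, h1, decode2 w, h2, h3⟩

lemma rearr (a s d e : F n) : (a + s + d) + (s + e) = a + (d + e) := by
  rw [(by abel : (a + s + d) + (s + e) = a + (d + e) + (s + s)), two_torsion, add_zero]

lemma dist_shift (bv s yv : F n) : hammingDist bv (yv + s) = hammingDist (bv + s) yv := by
  have h1 : s + (yv + s) = yv := by rw [add_comm yv s, ← add_assoc, two_torsion, zero_add]
  have h2 := hammingDist_add_left s bv (yv + s)
  rw [h1] at h2
  rw [← h2, add_comm s bv]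

lemma moll_perfect {Ct : Set (F t)} {Cm : Set (F m)}
    (hCt : IsPerfectCode Ct) (hCm : IsPerfectCode Cm) :
    IsPerfectCode (mollCode Ct Cm (fun _ => 0)) := by
  intro w
  obtain ⟨x, b, c, rfl⟩ : ∃ x b c, w = mollVec x b c := ⟨q0 w, q1 w, q2 w, (mollVec_q w).symm⟩
  obtain ⟨yu, ⟨hyu, hdyu⟩, hyuniq⟩ := hCt (b + p1 x)
  obtain ⟨zv, ⟨hzv, hdzv⟩, hzvniq⟩ := hCm (c + p2 x)
  -- the "error patterns"
  set du : F t := (b + p1 x) + yu with hdu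
  set dv : F m := (c + p2 x) + zv with hdv
  have hyu_eq : yu = (b + p1 x) + du := by rw [hdu, add_cancel_left]
  have hzv_eq : zv = (c + p2 x) + dv := by rw [hdv, add_cancel_left]
  have hducases : du = 0 ∨ ∃ i, du = (Pi.single i 1 : F t) := by
    rcases hammingDist_le_one hdyu with h | ⟨i, h⟩
    · left; rw [hdu, h, two_torsion]
    · right; exact ⟨i, by rw [hdu, h, add_cancel_left]⟩
  have hdvcases : dv = 0 ∨ ∃ j, dv = (Pi.single j 1 : F m) := by
    rcases hammingDist_le_one hdzv with h | ⟨j, h⟩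
    · left; rw [hdv, h, two_torsion]
    · right; exact ⟨j, by rw [hdv, h, add_cancel_left]⟩
  -- the correction vector on the information block
  set δ : F (t * m) := fun k => du (finProdFinEquiv.symm k).1 * dv (finProdFinEquiv.symm k).2
    with hδ
  have hδ0 : du = 0 ∨ dv = 0 → δ = 0 := by
    rintro (h | h) <;> · funext k; simp [hδ, h]
  have hδ1 : ∀ i j, du = (Pi.single i 1 : F t) → dv = (Pi.single j 1 : F m) →
      δ = (Pi.single (finProdFinEquiv (i, j)) 1 : F (t * m)) := by
    intro i j h1 h2
    funext k
    obtain ⟨⟨i', j'⟩, rfl⟩ := finProdFinEquiv.surjective k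
    simp only [hδ, h1, h2, Equiv.symm_apply_apply, Pi.single_apply,
      Equiv.apply_eq_iff_eq, Prod.mk.injEq]
    by_cases ha : i' = i <;> by_cases hb : j' = j <;> simp [ha, hb]
  -- the unique close codeword
  refine ⟨mollVec (x + δ) (yu + p1 (x + δ)) (zv + p2 (x + δ)), ⟨moll_intro hyu hzv, ?_⟩, ?_⟩
  · -- it is indeed close
    have h2nd : yu + p1 (x + δ) = b + (du + p1 δ) := by
      rw [hyu_eq, p1_add]
      exact rearr b (p1 x) du (p1 δ)
    have h3rd : zv + p2 (x + δ) = c + (dv + p2 δ) := by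
      rw [hzv_eq, p2_add]
      exact rearr c (p2 x) dv (p2 δ)
    rw [h2nd, h3rd, hammingDist_sum_card]
    rcases hducases with h | ⟨i, hi⟩ <;> rcases hdvcases with h' | ⟨j, hj⟩
    · rw [hδ0 (Or.inl h), h, h']
      simp
    · rw [hδ0 (Or.inl h), h]
      simp only [add_zero, p1_zero, p2_zero, hammingDist_self, zero_add]
      rw [hj, hammingDist_single]
    · rw [hδ0 (Or.inr h'), h']
      simp only [add_zero, p1_zero, p2_zero, hammingDist_self, add_zero, zero_add]
      rw [hi, hammingDist_single]
    · rw [hδ1 i j hi hj, p1_single, p2_single, hi, hj, two_torsion, two_torsion,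
        add_zero, add_zero, hammingDist_self, hammingDist_self, hammingDist_single]
  · -- uniqueness
    rintro w' ⟨hw'mem, hw'dist⟩
    obtain ⟨x', y, hy, z, hz, rfl⟩ := moll_decomp hw'mem
    rw [hammingDist_sum_card] at hw'dist
    have hd1 : hammingDist x x' ≤ 1 := by omega
    rcases hammingDist_le_one hd1 with hx' | ⟨k, hk⟩
    · -- information blocks agree
      subst hx'
      have e2 : hammingDist b (y + p1 x') = hammingDist (b + p1 x') y := dist_shift _ _ _
      have e3 : hammingDist c (z + p2 x') = hammingDist (c + p2 x') z := dist_shift _ _ _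
      rw [e2, e3] at hw'dist
      have hyyu : y = yu := hyuniq y ⟨hy, by omega⟩
      have hzzv : z = zv := hzvniq z ⟨hz, by omega⟩
      have hδz : δ = 0 := by
        apply hδ0
        rcases Nat.eq_zero_or_pos (hammingDist (b + p1 x') y) with h0 | hpos
        · left
          rw [hammingDist_eq_zero] at h0
          rw [hdu, ← hyyu, ← h0, two_torsion]
        · right
          have h0 : hammingDist (c + p2 x') z = 0 := by omega
          rw [hammingDist_eq_zero] at h0
          rw [hdv, ← hzzv, ← h0, two_torsion]
      rw [hδz, add_zero, hyyu, hzzv]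
    · -- information blocks differ in one position
      obtain ⟨⟨i, j⟩, rfl⟩ := finProdFinEquiv.surjective k
      subst hk
      rw [hammingDist_single] at hw'dist
      have e2 : b = y + p1 (x + Pi.single (finProdFinEquiv (i, j)) 1) := by
        have : hammingDist b (y + p1 (x + Pi.single (finProdFinEquiv (i, j)) 1)) = 0 := by omega
        exact hammingDist_eq_zero.mp this
      have e3 : c = z + p2 (x + Pi.single (finProdFinEquiv (i, j)) 1) := by
        have : hammingDist c (z + p2 (x + Pi.single (finProdFinEquiv (i, j)) 1)) = 0 := by omega
        exact hammingDist_eq_zero.mp this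
      have hy_eq : y = (b + p1 x) + Pi.single i 1 := by
        rw [e2, p1_add, p1_single]
        rw [(by abel : y + (p1 x + Pi.single i 1) + p1 x + Pi.single i 1 =
          y + (p1 x + p1 x) + (Pi.single i 1 + Pi.single i 1)), two_torsion, two_torsion,
          add_zero, add_zero]
      have hz_eq : z = (c + p2 x) + Pi.single j 1 := by
        rw [e3, p2_add, p2_single]
        rw [(by abel : z + (p2 x + Pi.single j 1) + p2 x + Pi.single j 1 =
          z + (p2 x + p2 x) + (Pi.single j 1 + Pi.single j 1)), two_torsion, two_torsion,
          add_zero, add_zero]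
      have hyyu : y = yu := by
        refine hyuniq y ⟨hy, ?_⟩
        rw [hy_eq, hammingDist_single]
      have hzzv : z = zv := by
        refine hzvniq z ⟨hz, ?_⟩
        rw [hz_eq, hammingDist_single]
      have hdu_eq : du = Pi.single i 1 := by
        rw [hdu, ← hyyu, hy_eq, add_cancel_left]
      have hdv_eq : dv = Pi.single j 1 := by
        rw [hdv, ← hzzv, hz_eq, add_cancel_left]
      rw [hδ1 i j hdu_eq hdv_eq, hyyu, hzzv]

/-! #### Propelinearity of the Mollard code -/

lemma mollVec_eq {x x' : F (t * m)} {b b' : F t} {c c' : F m}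
    (h1 : x = x') (h2 : b = b') (h3 : c = c') : mollVec x b c = mollVec x' b' c' := by
  rw [h1, h2, h3]

lemma moll_key (α : Equiv.Perm (Fin t)) (β : Equiv.Perm (Fin m)) (x x' : F (t * m))
    (y y' : F t) (z z' : F m) :
    mollVec x (y + p1 x) (z + p2 x) +
        permAct (bigPerm α β) (mollVec x' (y' + p1 x') (z' + p2 x')) =
      mollVec (x + permAct (prodPerm α β) x')
        ((y + permAct α y') + p1 (x + permAct (prodPerm α β) x'))
        ((z + permAct β z') + p2 (x + permAct (prodPerm α β) x')) := by
  rw [permAct_bigPerm, permAct_add, permAct_add, mollVec_add, p1_add, p2_add,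
    p1_permAct, p2_permAct]
  exact mollVec_eq rfl (by abel) (by abel)

lemma moll_propelinear {Ct : Set (F t)} {Cm : Set (F m)}
    (hPt : IsPropelinear Ct) (hPm : IsPropelinear Cm) :
    IsPropelinear (mollCode Ct Cm (fun _ => 0)) := by
  obtain ⟨Pt, PtIso, PtComp⟩ := hPt
  obtain ⟨Pm, PmIso, PmComp⟩ := hPm
  refine ⟨fun w => bigPerm (Pt (decode1 w)) (Pm (decode2 w)), ?_, ?_⟩
  · -- isometries stabilizing the code
    intro w hw
    obtain ⟨x, y, hy, z, hz, rfl⟩ := moll_decomp hw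
    rw [IsIsoPair]
    simp only [decode1_mollVec, decode2_mollVec]
    apply Set.Subset.antisymm
    · rintro _ ⟨w', hw', rfl⟩
      obtain ⟨x', y', hy', z', hz', rfl⟩ := moll_decomp hw'
      dsimp only
      rw [moll_key]
      refine moll_intro ?_ ?_
      · have himg := PtIso y hy
        rw [IsIsoPair] at himg
        rw [← himg]
        exact ⟨y', hy', rfl⟩
      · have himg := PmIso z hz
        rw [IsIsoPair] at himg
        rw [← himg]
        exact ⟨z', hz', rfl⟩
    · intro w'' hw''
      obtain ⟨x'', y'', hy'', z'', hz'', rfl⟩ := moll_decomp hw''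
      set α := Pt y with hα
      set β := Pm z with hβ
      set wa := mollVec x (y + p1 x) (z + p2 x) with hwa
      set wb := mollVec x'' (y'' + p1 x'') (z'' + p2 x'') with hwb
      refine ⟨permAct (bigPerm α⁻¹ β⁻¹) (wa + wb), ?_, ?_⟩
      · -- the preimage is a codeword
        have hsum : wa + wb = mollVec (x + x'') ((y + y'') + p1 (x + x''))
            ((z + z'') + p2 (x + x'')) := by
          rw [hwa, hwb, mollVec_add]
          exact mollVec_eq rfl (by rw [p1_add]; abel) (by rw [p2_add]; abel)
        rw [hsum, permAct_bigPerm]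
        have h1 : permAct α⁻¹ ((y + y'') + p1 (x + x'')) =
            permAct α⁻¹ (y + y'') + p1 (permAct (prodPerm α⁻¹ β⁻¹) (x + x'')) := by
          rw [permAct_add, p1_permAct]
        have h2 : permAct β⁻¹ ((z + z'') + p2 (x + x'')) =
            permAct β⁻¹ (z + z'') + p2 (permAct (prodPerm α⁻¹ β⁻¹) (x + x'')) := by
          rw [permAct_add, p2_permAct]
        rw [h1, h2]
        refine moll_intro ?_ ?_
        · have himg := PtIso y hy
          rw [IsIsoPair] at himg
          have : y'' ∈ (fun c => y + permAct α c) '' Ct := by rw [himg]; exact hy''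
          obtain ⟨cc, hcc, hccy⟩ := this
          have : permAct α⁻¹ (y + y'') = cc := by
            rw [← hccy, add_cancel_left, permAct_inv_act]
          rw [this]; exact hcc
        · have himg := PmIso z hz
          rw [IsIsoPair] at himg
          have : z'' ∈ (fun c => z + permAct β c) '' Cm := by rw [himg]; exact hz''
          obtain ⟨cc, hcc, hccz⟩ := this
          have : permAct β⁻¹ (z + z'') = cc := by
            rw [← hccz, add_cancel_left, permAct_inv_act]
          rw [this]; exact hcc
      · -- it maps onto `w''`
        show wa + permAct (bigPerm α β) (permAct (bigPerm α⁻¹ β⁻¹) (wa + wb)) = wb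
        rw [← permAct_mul, ← bigPerm_mul, mul_inv_cancel, mul_inv_cancel, bigPerm_one,
          permAct_one, add_cancel_left]
  · -- composition law
    intro w hw w' hw'
    obtain ⟨x, y, hy, z, hz, rfl⟩ := moll_decomp hw
    obtain ⟨x', y', hy', z', hz', rfl⟩ := moll_decomp hw'
    dsimp only
    rw [decode1_mollVec, decode2_mollVec, decode1_mollVec, decode2_mollVec, moll_key,
      decode1_mollVec, decode2_mollVec, PtComp y hy y' hy', PmComp z hz z' hz', bigPerm_mul]

/-! #### Rank of the Mollard code -/

/-- The underlying linear equivalence of the Mollard construction. -/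
noncomputable def mollEquiv (t m : ℕ) :
    ((F (t * m)) × (F t) × (F m)) ≃ₗ[ZMod 2] F (t * m + t + m) := by
  refine AddEquiv.toLinearEquiv
    ⟨⟨fun p => mollVec p.1 (p.2.1 + p1 p.1) (p.2.2 + p2 p.1),
      fun w => (q0 w, decode1 w, decode2 w), ?_, ?_⟩, ?_⟩ ?_
  · rintro ⟨x, b, c⟩
    simp only [q0_mollVec, decode1_mollVec, decode2_mollVec]
  · intro w
    simp only [decode1, decode2, add_add_cancel]
    exact mollVec_q w
  · rintro ⟨x, b, c⟩ ⟨x', b', c'⟩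
    show mollVec (x + x') ((b + b') + p1 (x + x')) ((c + c') + p2 (x + x')) = _
    rw [mollVec_add]
    exact mollVec_eq rfl (by rw [p1_add]; abel) (by rw [p2_add]; abel)
  · intro r p
    have : r = 0 ∨ r = 1 := by revert r; decide
    rcases this with rfl | rfl
    · show mollVec _ _ _ = (0 : ZMod 2) • _
      rw [zero_smul, zero_smul]
      show mollVec 0 (0 + p1 0) (0 + p2 0) = 0
      simp only [p1_zero, p2_zero, add_zero, mollVec_zero]
    · rw [one_smul, one_smul]

lemma mollCode_eq_image (Ct : Set (F t)) (Cm : Set (F m)) :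
    mollCode Ct Cm (fun _ => 0) =
      mollEquiv t m '' ((Set.univ : Set (F (t * m))) ×ˢ Ct ×ˢ Cm) := by
  ext w
  constructor
  · rintro ⟨x, y, hy, z, hz, rfl⟩
    exact ⟨(x, y, z), ⟨trivial, hy, hz⟩, by rw [add_zero]; rfl⟩
  · rintro ⟨⟨x, y, z⟩, ⟨-, hy, hz⟩, rfl⟩
    exact ⟨x, y, hy, z, hz, by rw [add_zero]; rfl⟩

/-- Equivalence between a product of submodules and the submodule product. -/
def subProdEquiv {R M N : Type*} [Ring R] [AddCommGroup M] [AddCommGroup N]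
    [Module R M] [Module R N] (p : Submodule R M) (q : Submodule R N) :
    (p.prod q) ≃ₗ[R] p × q where
  toFun x := (⟨x.1.1, x.2.1⟩, ⟨x.1.2, x.2.2⟩)
  map_add' _ _ := rfl
  map_smul' _ _ := rfl
  invFun y := ⟨(y.1.1, y.2.1), y.1.2, y.2.2⟩
  left_inv _ := rfl
  right_inv _ := rfl

lemma span_prod_eq {Ct : Set (F t)} {Cm : Set (F m)} (h0t : (0 : F t) ∈ Ct)
    (h0m : (0 : F m) ∈ Cm) :
    Submodule.span (ZMod 2) ((Set.univ : Set (F (t * m))) ×ˢ Ct ×ˢ Cm) =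
      (⊤ : Submodule (ZMod 2) (F (t * m))).prod
        ((Submodule.span (ZMod 2) Ct).prod (Submodule.span (ZMod 2) Cm)) := by
  apply le_antisymm
  · rw [Submodule.span_le]
    rintro ⟨a, b, c⟩ ⟨-, hb, hc⟩
    exact ⟨trivial, Submodule.subset_span hb, Submodule.subset_span hc⟩
  · rintro ⟨a, b, c⟩ ⟨-, hb, hc⟩
    have h1 : ((a, 0, 0) : F (t * m) × F t × F m) ∈
        Submodule.span (ZMod 2) ((Set.univ : Set (F (t * m))) ×ˢ Ct ×ˢ Cm) :=
      Submodule.subset_span ⟨trivial, h0t, h0m⟩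
    have h2 : ((0, b, 0) : F (t * m) × F t × F m) ∈
        Submodule.span (ZMod 2) ((Set.univ : Set (F (t * m))) ×ˢ Ct ×ˢ Cm) := by
      set j2 : F t →ₗ[ZMod 2] F (t * m) × F t × F m :=
        (LinearMap.inr (ZMod 2) (F (t * m)) (F t × F m)).comp
          (LinearMap.inl (ZMod 2) (F t) (F m)) with hj2
      have hmem : ((0, b, 0) : F (t * m) × F t × F m) ∈
          Submodule.map j2 (Submodule.span (ZMod 2) Ct) :=
        Submodule.mem_map_of_mem hb
      rw [Submodule.map_span] at hmem
      refine Submodule.span_mono ?_ hmem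
      rintro _ ⟨b', hb', rfl⟩
      exact ⟨trivial, hb', h0m⟩
    have h3 : ((0, 0, c) : F (t * m) × F t × F m) ∈
        Submodule.span (ZMod 2) ((Set.univ : Set (F (t * m))) ×ˢ Ct ×ˢ Cm) := by
      set j3 : F m →ₗ[ZMod 2] F (t * m) × F t × F m :=
        (LinearMap.inr (ZMod 2) (F (t * m)) (F t × F m)).comp
          (LinearMap.inr (ZMod 2) (F t) (F m)) with hj3
      have hmem : ((0, 0, c) : F (t * m) × F t × F m) ∈
          Submodule.map j3 (Submodule.span (ZMod 2) Cm) :=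
        Submodule.mem_map_of_mem hc
      rw [Submodule.map_span] at hmem
      refine Submodule.span_mono ?_ hmem
      rintro _ ⟨c', hc', rfl⟩
      exact ⟨trivial, h0t, hc'⟩
    have hdecomp : ((a, b, c) : F (t * m) × F t × F m) = (a, 0, 0) + (0, b, 0) + (0, 0, c) := by
      simp
    rw [hdecomp]
    exact add_mem (add_mem h1 h2) h3

lemma moll_rank {Ct : Set (F t)} {Cm : Set (F m)} (h0t : (0 : F t) ∈ Ct)
    (h0m : (0 : F m) ∈ Cm) :
    codeRank (mollCode Ct Cm (fun _ => 0)) = t * m + codeRank Ct + codeRank Cm := by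
  haveI : Fact (Nat.Prime 2) := ⟨Nat.prime_two⟩
  rw [codeRank, mollCode_eq_image]
  rw [show (mollEquiv t m '' ((Set.univ : Set (F (t * m))) ×ˢ Ct ×ˢ Cm)) =
    ((mollEquiv t m).toLinearMap '' ((Set.univ : Set (F (t * m))) ×ˢ Ct ×ˢ Cm)) from rfl]
  rw [← Submodule.map_span, LinearEquiv.finrank_map_eq, span_prod_eq h0t h0m]
  have e2 := LinearEquiv.finrank_eq
    (subProdEquiv (⊤ : Submodule (ZMod 2) (F (t * m)))
      ((Submodule.span (ZMod 2) Ct).prod (Submodule.span (ZMod 2) Cm)))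
  have e3 := LinearEquiv.finrank_eq
    (subProdEquiv (Submodule.span (ZMod 2) Ct) (Submodule.span (ZMod 2) Cm))
  rw [e2, Module.finrank_prod, e3, Module.finrank_prod, finrank_top,
    Module.finrank_pi, Fintype.card_fin, codeRank, codeRank, add_assoc]

end MollardAux

open MollardAux

/-- From propelinear perfect codes of lengths `t` and `m` with ranks `rt`, `rm`
one obtains a propelinear perfect code of length `tm+t+m` and rank `tm+rt+rm`. -/
theorem mollard_rank_transfer {t m rt rm : ℕ}
    (ht : ∃ Ct : Set (F t),
      IsPerfectCode Ct ∧ (0 : F t) ∈ Ct ∧ IsPropelinear Ct ∧ codeRank Ct = rt)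
    (hm : ∃ Cm : Set (F m),
      IsPerfectCode Cm ∧ (0 : F m) ∈ Cm ∧ IsPropelinear Cm ∧ codeRank Cm = rm) :
    ∃ C : Set (F (t * m + t + m)),
      IsPerfectCode C ∧ (0 : F (t * m + t + m)) ∈ C ∧ IsPropelinear C ∧
        codeRank C = t * m + rt + rm := by
  obtain ⟨Ct, hCtperf, h0t, hCtprop, hrt⟩ := ht
  obtain ⟨Cm, hCmperf, h0m, hCmprop, hrm⟩ := hm
  refine ⟨mollCode Ct Cm (fun _ => 0), moll_perfect hCtperf hCmperf, ?_, 
    moll_propelinear hCtprop hCmprop, ?_⟩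
  · have h := moll_intro (x := (0 : F (t * m))) h0t h0m
    rw [p1_zero, p2_zero, add_zero, add_zero, mollVec_zero] at h
    exact h
  · rw [moll_rank h0t h0m, hrt, hrm]
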